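/- Let f: ℝⁿ → ℝ have M-Lipschitz Hessian. Suppose (∇²f(y) + (σ + λ)I)d = −∇f(y) with σ, λ ≥ 0, λ ≤ (θ−1)σ for some θ > 1, ‖d‖ ≤ σ/M, and σ ≤ √(2Mε/(1+2θ)). Then ‖∇f(y + d)‖ ≤ ε. -/

import Mathlib

open Real

/-- Early-termination guarantee: if `(∇²f(y) + (σ+λ)I) d = -∇f(y)` with `σ, λ ≥ 0`,
`λ ≤ (θ-1)σ` (`θ > 1`), `‖d‖ ≤ σ/M`, and `σ ≤ √(2Mε/(1+2θ))`, then
`‖∇f(y+d)‖ ≤ ε`. -/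
theorem stmt13 {n : ℕ} (f : EuclideanSpace ℝ (Fin n) → ℝ) (M σ lam θ ε : ℝ)
    (y d : EuclideanSpace ℝ (Fin n))
    (hf : ContDiff ℝ 2 f) (hM : 0 < M) (hε : 0 < ε)
    (hLip : ∀ u v : EuclideanSpace ℝ (Fin n),
      ‖fderiv ℝ (gradient f) u - fderiv ℝ (gradient f) v‖ ≤ M * ‖u - v‖)
    (hσ : 0 ≤ σ) (hlam : 0 ≤ lam) (hθ : 1 < θ) (hlamσ : lam ≤ (θ - 1) * σ)
    (heq : (fderiv ℝ (gradient f) y) d + (σ + lam) • d = - gradient f y)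
    (hd : ‖d‖ ≤ σ / M)
    (hσε : σ ≤ Real.sqrt (2 * M * ε / (1 + 2 * θ))) :
    ‖gradient f (y + d)‖ ≤ ε := by
  set g := gradient f with hgdef
  have hg : ContDiff ℝ 1 g := by
    have h1 : ContDiff ℝ 1 (fderiv ℝ f) := hf.fderiv_right (by norm_num)
    have : g = fun x => (InnerProductSpace.toDual ℝ _).symm (fderiv ℝ f x) := rfl
    rw [this]
    exact (InnerProductSpace.toDual ℝ _).symm.contDiff.comp h1
  have hgdiff : Differentiable ℝ g := hg.differentiable one_ne_zero
  set Dg := fun x => fderiv ℝ g x with hDg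
  -- curve
  set F : ℝ → EuclideanSpace ℝ (Fin n) := fun t => g (y + t • d) - g y - t • (Dg y d) with hF
  have hcurve : ∀ t : ℝ, HasDerivAt (fun t : ℝ => y + t • d) d t := by
    intro t
    simpa using ((hasDerivAt_id t).smul_const d).const_add y
  have hF' : ∀ t : ℝ, HasDerivAt F (Dg (y + t • d) d - Dg y d) t := by
    intro t
    have h1 : HasDerivAt (fun t : ℝ => g (y + t • d)) (Dg (y + t • d) d) t := by
      have := ((hgdiff (y + t • d)).hasFDerivAt).comp_hasDerivAt t (hcurve t)
      exact this
    have h2 := (h1.sub_const (g y)).sub ((hasDerivAt_id t).smul_const (Dg y d))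
    simp only [one_smul] at h2
    exact h2
  have hbound : ∀ t ∈ Set.Ico (0:ℝ) 1, ‖Dg (y + t • d) d - Dg y d‖ ≤ (M * ‖d‖^2) * t := by
    intro t ht
    have h1 : ‖Dg (y + t • d) d - Dg y d‖ ≤ ‖Dg (y + t • d) - Dg y‖ * ‖d‖ := by
      rw [← ContinuousLinearMap.sub_apply]
      exact ContinuousLinearMap.le_opNorm _ d
    have h2 : ‖Dg (y + t • d) - Dg y‖ ≤ M * ‖t • d‖ := by
      have := hLip (y + t • d) y
      rwa [add_sub_cancel_left] at this
    have h3 : ‖t • d‖ = t * ‖d‖ := by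
      rw [norm_smul, Real.norm_eq_abs, abs_of_nonneg ht.1]
    calc ‖Dg (y + t • d) d - Dg y d‖ ≤ ‖Dg (y + t • d) - Dg y‖ * ‖d‖ := h1
      _ ≤ M * (t * ‖d‖) * ‖d‖ := by rw [← h3]; exact mul_le_mul_of_nonneg_right h2 (norm_nonneg d)
      _ = (M * ‖d‖^2) * t := by ring
  have hB : ∀ t : ℝ, HasDerivAt (fun t => M * ‖d‖^2 * t^2 / 2) (M * ‖d‖^2 * t) t := by
    intro t
    have := ((hasDerivAt_pow 2 t).const_mul (M * ‖d‖^2)).div_const 2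
    refine this.congr_deriv ?_
    ring
  have hF0 : ‖F 0‖ ≤ M * ‖d‖^2 * (0:ℝ)^2 / 2 := by simp [hF]
  have key : ‖F 1‖ ≤ M * ‖d‖^2 * 1^2 / 2 :=
    image_norm_le_of_norm_deriv_right_le_deriv_boundary
      (f := F) (f' := fun t => Dg (y + t • d) d - Dg y d)
      (fun t _ => (hF' t).continuousAt.continuousWithinAt)
      (fun t _ => (hF' t).hasDerivWithinAt)
      hF0 hB hbound (Set.right_mem_Icc.2 zero_le_one)
  have hF1 : F 1 = g (y + d) + (σ + lam) • d := by
    simp only [hF, one_smul]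
    have hDgy : Dg y d = - g y - (σ + lam) • d := by
      have := heq
      linear_combination (norm := abel) this
    rw [hDgy]
    abel
  have hgyd : ‖g (y + d)‖ ≤ M * ‖d‖^2 / 2 + (σ + lam) * ‖d‖ := by
    have : g (y + d) = F 1 - (σ + lam) • d := by rw [hF1]; abel
    rw [this]
    calc ‖F 1 - (σ + lam) • d‖ ≤ ‖F 1‖ + ‖(σ + lam) • d‖ := norm_sub_le _ _
      _ ≤ M * ‖d‖^2 * 1^2 / 2 + (σ + lam) * ‖d‖ := by
          gcongr
          rw [norm_smul, Real.norm_eq_abs, abs_of_nonneg (by linarith)]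
      _ = M * ‖d‖^2 / 2 + (σ + lam) * ‖d‖ := by ring
  -- numeric part
  have hσ2 : σ^2 ≤ 2 * M * ε / (1 + 2 * θ) := by
    have hnn : 0 ≤ 2 * M * ε / (1 + 2 * θ) := by positivity
    nlinarith [Real.sq_sqrt hnn, Real.sqrt_nonneg (2 * M * ε / (1 + 2 * θ))]
  have hdn : 0 ≤ ‖d‖ := norm_nonneg d
  have hmd : ‖d‖ * M ≤ σ := (le_div_iff₀ hM).mp hd
  have h1 : M * ‖d‖^2 / 2 ≤ σ^2 / (2*M) := by
    rw [div_le_div_iff₀ (by positivity) (by positivity)]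
    nlinarith [mul_le_mul hmd hmd (by positivity : (0:ℝ) ≤ ‖d‖ * M) hσ]
  have h2 : (σ + lam) * ‖d‖ ≤ θ * σ * (σ / M) := by
    have hθσ : 0 ≤ θ * σ := mul_nonneg (by linarith) hσ
    have hsl : σ + lam ≤ θ * σ := by
      have hr : (θ - 1) * σ = θ * σ - σ := by ring
      linarith [hlamσ]
    calc (σ + lam) * ‖d‖ ≤ (θ * σ) * ‖d‖ := mul_le_mul_of_nonneg_right hsl hdn
      _ ≤ θ * σ * (σ / M) := mul_le_mul_of_nonneg_left hd hθσ
  have h3 : σ^2 * (1 + 2*θ) ≤ 2 * M * ε := by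
    rw [le_div_iff₀ (by linarith)] at hσ2
    linarith
  have hfin : σ^2 / (2*M) + θ * σ * (σ / M) ≤ ε := by
    have heqn : σ^2 / (2*M) + θ * σ * (σ / M) = σ^2 * (1 + 2*θ) / (2*M) := by
      field_simp
    rw [heqn, div_le_iff₀ (by positivity)]
    linarith
  calc ‖g (y+d)‖ ≤ M * ‖d‖^2 / 2 + (σ + lam) * ‖d‖ := hgyd
    _ ≤ σ^2 / (2*M) + θ * σ * (σ / M) := add_le_add h1 h2
    _ ≤ ε := hfin
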